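/- If 𝒜 is an A-valued function algebra on X and ℐ is an ideal in 𝒜 such that ℐ(x₀) and ℐ(x₁) are proper ideals of A for two distinct points x₀ ≠ x₁ of X, then ℐ is not a maximal ideal of 𝒜. -/

import Mathlib

variable {X : Type*} [TopologicalSpace X] [CompactSpace X] [T2Space X]
variable {A : Type*} [NormedCommRing A] [NormedAlgebra ℂ A] [CompleteSpace A] [Nontrivial A]

/-- Evaluation at a point, as a ring homomorphism on an `A`-valued function algebra
`𝒜 ⊆ C(X, A)`. -/
def evalHom (𝒜 : Subalgebra ℂ C(X, A)) (x : X) : ↥𝒜 →+* A where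
  toFun f := (f : C(X, A)) x
  map_one' := rfl
  map_mul' _ _ := rfl
  map_zero' := rfl
  map_add' _ _ := rfl

/-- If ℐ is an ideal of 𝒜 such that ℐ(x₀) and ℐ(x₁) are proper for distinct x₀ ≠ x₁,
then ℐ is not maximal. -/
theorem stmt4 (𝒜 : Subalgebra ℂ C(X, A))
    (hconst : ∀ a : A, ContinuousMap.const X a ∈ 𝒜)
    (hsep : ∀ x y : X, x ≠ y → ∀ M : Ideal A, M.IsMaximal → ∃ f ∈ 𝒜, f x - f y ∉ M)
    (ℐ : Ideal ↥𝒜) (x₀ x₁ : X) (hx : x₀ ≠ x₁)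
    (h₀ : {a : A | ∃ f ∈ ℐ, (f : C(X, A)) x₀ = a} ≠ Set.univ)
    (h₁ : {a : A | ∃ f ∈ ℐ, (f : C(X, A)) x₁ = a} ≠ Set.univ) :
    ¬ ℐ.IsMaximal := by
  intro hmax
  have hsurj₀ : Function.Surjective (evalHom 𝒜 x₀) := fun a =>
    ⟨⟨ContinuousMap.const X a, hconst a⟩, rfl⟩
  have hsurj₁ : Function.Surjective (evalHom 𝒜 x₁) := fun a =>
    ⟨⟨ContinuousMap.const X a, hconst a⟩, rfl⟩
  have hJ₀ : Ideal.map (evalHom 𝒜 x₀) ℐ ≠ ⊤ := by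
    intro htop
    apply h₀
    ext a
    simp only [Set.mem_univ, iff_true, Set.mem_setOf_eq]
    have : a ∈ Ideal.map (evalHom 𝒜 x₀) ℐ := htop ▸ Submodule.mem_top
    exact (Ideal.mem_map_iff_of_surjective _ hsurj₀).mp this
  have hJ₁ : Ideal.map (evalHom 𝒜 x₁) ℐ ≠ ⊤ := by
    intro htop
    apply h₁
    ext a
    simp only [Set.mem_univ, iff_true, Set.mem_setOf_eq]
    have : a ∈ Ideal.map (evalHom 𝒜 x₁) ℐ := htop ▸ Submodule.mem_top
    exact (Ideal.mem_map_iff_of_surjective _ hsurj₁).mp this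
  obtain ⟨M₀, hM₀max, hM₀le⟩ := Ideal.exists_le_maximal _ hJ₀
  obtain ⟨M₁, hM₁max, hM₁le⟩ := Ideal.exists_le_maximal _ hJ₁
  have hle₀ : ℐ ≤ Ideal.comap (evalHom 𝒜 x₀) M₀ :=
    Ideal.map_le_iff_le_comap.mp hM₀le
  have hle₁ : ℐ ≤ Ideal.comap (evalHom 𝒜 x₁) M₁ :=
    Ideal.map_le_iff_le_comap.mp hM₁le
  have hne₀ : Ideal.comap (evalHom 𝒜 x₀) M₀ ≠ ⊤ :=
    Ideal.comap_ne_top _ hM₀max.ne_top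
  have hne₁ : Ideal.comap (evalHom 𝒜 x₁) M₁ ≠ ⊤ :=
    Ideal.comap_ne_top _ hM₁max.ne_top
  have heq₀ : ℐ = Ideal.comap (evalHom 𝒜 x₀) M₀ := hmax.eq_of_le hne₀ hle₀
  have heq₁ : ℐ = Ideal.comap (evalHom 𝒜 x₁) M₁ := hmax.eq_of_le hne₁ hle₁
  obtain ⟨f, hf𝒜, hfM⟩ := hsep x₀ x₁ hx M₀ hM₀max
  set g : ↥𝒜 := ⟨f, hf𝒜⟩ - ⟨ContinuousMap.const X (f x₁), hconst _⟩ with hg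
  have hg₁ : evalHom 𝒜 x₁ g = 0 := by
    rw [hg, map_sub]
    exact sub_self (f x₁)
  have hgℐ : g ∈ ℐ := by
    rw [heq₁]
    simp [Ideal.mem_comap, hg₁]
  have hg₀ : evalHom 𝒜 x₀ g ∈ M₀ := by
    have := hgℐ
    rw [heq₀] at this
    exact this
  exact hfM hg₀
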